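/- Let M₁, …, Mₙ be positive semidefinite operators summing to I on a finite-dimensional complex Hilbert space, with exactly m of them equal to a fixed effect E. If there exists a unit vector φ such that ⟨φ, Mⱼ φ⟩ = 0 for all j with Mⱼ ≠ E, then E φ = (1/m) φ; in particular 1/m is the largest eigenvalue of E. -/

import Mathlib

open scoped InnerProductSpace Classical

lemma pos_apply_eq_zero {H : Type*} [NormedAddCommGroup H] [InnerProductSpace ℂ H]
    [CompleteSpace H] {T : H →L[ℂ] H} (hT : T.IsPositive) {φ : H}
    (h : ⟪φ, T φ⟫_ℂ = 0) : T φ = 0 := by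
  have hsymm : (T : H →ₗ[ℂ] H).IsSymmetric :=
    hT.1
  set y := T φ with hy
  set C := Complex.re ⟪T y, y⟫_ℂ with hC
  have hC0 : 0 ≤ C := hT.2 y
  have h' : ⟪y, φ⟫_ℂ = 0 := by
    rw [hy, ← inner_conj_symm, h, map_zero]
  have key : ∀ t : ℝ, 0 ≤ 2 * t * ‖y‖ ^ 2 + t ^ 2 * C := by
    intro t
    have h0 := hT.2 (φ + (t : ℂ) • y)
    have hexp : ⟪T (φ + (t : ℂ) • y), φ + (t : ℂ) • y⟫_ℂ
        = (2 * t * ‖y‖ ^ 2 : ℝ) + (t : ℂ) ^ 2 * ⟪T y, y⟫_ℂ := by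
      have h1 : ⟪T φ, y⟫_ℂ = (‖y‖ : ℂ) ^ 2 := by
        rw [← hy]; exact inner_self_eq_norm_sq_to_K y
      have h2 : ⟪T y, φ⟫_ℂ = (‖y‖ : ℂ) ^ 2 := by
        have := hsymm y φ
        simp only [ContinuousLinearMap.coe_coe] at this
        rw [this, ← hy]; exact inner_self_eq_norm_sq_to_K y
      have h3 : ⟪T φ, φ⟫_ℂ = 0 := by
        rw [← inner_conj_symm, h, map_zero]
      simp only [map_add, map_smul, inner_add_left, inner_add_right,
        inner_smul_left, inner_smul_right, h1, h2, h3, Complex.conj_ofReal]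
      push_cast
      ring
    rw [ContinuousLinearMap.reApplyInnerSelf, hexp] at h0
    simpa [Complex.add_re, Complex.mul_re, ← Complex.ofReal_pow] using h0
  have hnorm : ‖y‖ ^ 2 ≤ 0 := by
    by_contra hlt
    push_neg at hlt
    set N := ‖y‖ ^ 2 with hN
    have hC1 : (0:ℝ) < C + 1 := by linarith
    have hkey := key (-N / (C + 1))
    have hc : 2 * (-N / (C + 1)) * N + (-N / (C + 1)) ^ 2 * C
        = (-2 * N ^ 2 * (C + 1) + N ^ 2 * C) / (C + 1) ^ 2 := by
      field_simp
    rw [hc] at hkey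
    have hX : 0 ≤ -2 * N ^ 2 * (C + 1) + N ^ 2 * C := by
      rcases div_nonneg_iff.mp hkey with ⟨h1, _⟩ | ⟨_, h2⟩
      · exact h1
      · nlinarith
    nlinarith [mul_pos hlt hlt, mul_nonneg hC0 (le_of_lt (mul_pos hlt hlt))]
  have : ‖y‖ = 0 := by nlinarith [norm_nonneg y, sq_nonneg ‖y‖]
  simpa [hy] using norm_eq_zero.mp this

theorem partial_labeling_converse (d n : ℕ)
    (M : Fin n → (EuclideanSpace ℂ (Fin d) →L[ℂ] EuclideanSpace ℂ (Fin d)))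
    (hpos : ∀ j, (M j).IsPositive) (hsum : ∑ j, M j = 1)
    (E : EuclideanSpace ℂ (Fin d) →L[ℂ] EuclideanSpace ℂ (Fin d))
    (hE : ∃ i, M i = E) (m : ℕ)
    (hm : m = (Finset.univ.filter (fun j => M j = E)).card)
    (φ : EuclideanSpace ℂ (Fin d)) (hφ : ‖φ‖ = 1)
    (hzero : ∀ j, M j ≠ E → ⟪φ, (M j) φ⟫_ℂ = 0) :
    E φ = ((1 / m : ℝ) : ℂ) • φ ∧
      (∀ μ : ℝ, Module.End.HasEigenvalue
          (E : EuclideanSpace ℂ (Fin d) →ₗ[ℂ] EuclideanSpace ℂ (Fin d)) (μ : ℂ) →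
          μ ≤ 1 / m) := by
  obtain ⟨i, hi⟩ := hE
  have hmpos : 0 < m := by
    rw [hm]
    exact Finset.card_pos.mpr ⟨i, by simp [hi]⟩
  have hmC : (m : ℂ) ≠ 0 := Nat.cast_ne_zero.mpr hmpos.ne'
  have hMzero : ∀ j, M j ≠ E → M j φ = 0 := fun j hj =>
    pos_apply_eq_zero (hpos j) (hzero j hj)
  have hφsum : (m : ℂ) • E φ = φ := by
    have h1 : ∑ j, M j φ = φ := by
      rw [← ContinuousLinearMap.sum_apply, hsum]; rfl
    have h2 : ∑ j ∈ Finset.univ.filter (fun j => M j = E), M j φ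
        = ∑ _j ∈ Finset.univ.filter (fun j => M j = E), E φ :=
      Finset.sum_congr rfl (fun j hj => by rw [(Finset.mem_filter.mp hj).2])
    calc (m : ℂ) • E φ
        = ∑ j ∈ Finset.univ.filter (fun j => M j = E), M j φ := by
          rw [h2, Finset.sum_const, ← hm, Nat.cast_smul_eq_nsmul]
      _ = ∑ j, M j φ := Finset.sum_filter_of_ne
          (fun j _ hj => by by_contra hc; exact hj (hMzero j hc))
      _ = φ := h1
  have hpart1 : E φ = ((1 / m : ℝ) : ℂ) • φ := by
    have h : E φ = (m : ℂ)⁻¹ • φ := by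
      conv_rhs => rw [← hφsum]
      rw [smul_smul, inv_mul_cancel₀ hmC, one_smul]
    rw [h]
    norm_num
  refine ⟨hpart1, ?_⟩
  intro μ hμ
  obtain ⟨ψ, hψ⟩ := hμ.exists_hasEigenvector
  have hψne : ψ ≠ 0 := hψ.right
  have hψpos : 0 < ‖ψ‖ ^ 2 := by
    have : 0 < ‖ψ‖ := norm_pos_iff.mpr hψne
    positivity
  have hEψ : E ψ = (μ : ℂ) • ψ := hψ.apply_eq_smul
  have hinner : Complex.re ⟪ψ, E ψ⟫_ℂ = μ * ‖ψ‖ ^ 2 := by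
    rw [hEψ, inner_smul_right, inner_self_eq_norm_sq_to_K]
    push_cast
    simp [← Complex.ofReal_pow]
  have htot : ∑ j, Complex.re ⟪ψ, M j ψ⟫_ℂ = ‖ψ‖ ^ 2 := by
    have h1 : ∑ j, ⟪ψ, M j ψ⟫_ℂ = ⟪ψ, ψ⟫_ℂ := by
      rw [← inner_sum, ← ContinuousLinearMap.sum_apply, hsum]
      rfl
    rw [← Complex.re_sum, h1, inner_self_eq_norm_sq_to_K]
    simp [← Complex.ofReal_pow]
  have hfil : ∑ j ∈ Finset.univ.filter (fun j => M j = E),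
      Complex.re ⟪ψ, M j ψ⟫_ℂ = (m : ℝ) * (μ * ‖ψ‖ ^ 2) := by
    have h2 : ∑ j ∈ Finset.univ.filter (fun j => M j = E),
        Complex.re ⟪ψ, M j ψ⟫_ℂ
        = ∑ _j ∈ Finset.univ.filter (fun j => M j = E), (μ * ‖ψ‖ ^ 2) :=
      Finset.sum_congr rfl (fun j hj => by
        rw [(Finset.mem_filter.mp hj).2, hinner])
    rw [h2, Finset.sum_const, ← hm, nsmul_eq_mul]
  have hle : ∑ j ∈ Finset.univ.filter (fun j => M j = E),
      Complex.re ⟪ψ, M j ψ⟫_ℂ ≤ ∑ j, Complex.re ⟪ψ, M j ψ⟫_ℂ := by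
    refine Finset.sum_le_sum_of_subset_of_nonneg (Finset.subset_univ _) ?_
    intro j _ _
    rw [← inner_conj_symm, Complex.conj_re]
    exact (hpos j).2 ψ
  rw [hfil, htot] at hle
  have hm1 : (1 : ℝ) ≤ (m : ℝ) := Nat.one_le_cast.mpr hmpos
  rw [le_div_iff₀ (by linarith : (0:ℝ) < (m:ℝ))]
  nlinarith [hψpos, hle]
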